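/- For an edge (r,s) of a connected weighted graph, the locality factor η(r,s) = b_rs ν_rs^T B^† ν_rs equals 1 if and only if (r,s) is a bridge (i.e., its removal disconnects the graph). -/

import Mathlib

open Matrix BigOperators

/-- The weighted Laplacian of a weight function `w` on `Fin N`. -/
def lapMat {N : ℕ} (w : Fin N → Fin N → ℝ) : Matrix (Fin N) (Fin N) ℝ :=
  fun i j => if i = j then ∑ k, w i k else - w i j

/-- Symmetric, nonnegative weights with zero diagonal. -/
def IsWeight {N : ℕ} (w : Fin N → Fin N → ℝ) : Prop :=
  (∀ i j, w i j = w j i) ∧ (∀ i j, 0 ≤ w i j) ∧ (∀ i, w i i = 0)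

/-- The simple graph whose edges are the pairs with nonzero weight. -/
def wGraph {N : ℕ} (w : Fin N → Fin N → ℝ) : SimpleGraph (Fin N) where
  Adj i j := i ≠ j ∧ (w i j ≠ 0 ∨ w j i ≠ 0)
  symm := ⟨fun i j ⟨h1, h2⟩ => ⟨h1.symm, h2.symm⟩⟩
  loopless := ⟨fun i h => h.1 rfl⟩

/-- The dipole vector `ν_rs`: `+1` at `r`, `-1` at `s`, `0` elsewhere. -/
def dipole {N : ℕ} (r s : Fin N) : Fin N → ℝ :=
  fun i => (if i = r then (1:ℝ) else 0) - (if i = s then (1:ℝ) else 0)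

/-- `Bd` is the Moore-Penrose pseudoinverse of `B` (the four Penrose axioms). -/
def IsMoorePenrose {N : ℕ} (B Bd : Matrix (Fin N) (Fin N) ℝ) : Prop :=
  B * Bd * B = B ∧ Bd * B * Bd = Bd ∧ (B * Bd)ᵀ = B * Bd ∧ (Bd * B)ᵀ = Bd * B

/-- The locality factor `η(r,s) = b_rs ν_rs^T B^† ν_rs`. -/
def eta {N : ℕ} (w : Fin N → Fin N → ℝ) (Bdag : Matrix (Fin N) (Fin N) ℝ)
    (r s : Fin N) : ℝ :=
  w r s * (dipole r s ⬝ᵥ Bdag.mulVec (dipole r s))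

/-! ### Auxiliary lemmas -/

lemma lap_mulVec {N : ℕ} {w : Fin N → Fin N → ℝ} (hd : ∀ i, w i i = 0)
    (x : Fin N → ℝ) (i : Fin N) :
    (lapMat w).mulVec x i = ∑ j, w i j * (x i - x j) := by
  simp only [lapMat, Matrix.mulVec, dotProduct]
  have key : ∀ j : Fin N, (if i = j then ∑ k, w i k else -w i j) * x j
      = (if j = i then (∑ k, w i k) * x i else 0) - w i j * x j := by
    intro j
    by_cases h : i = j
    · subst h; simp [hd i]
    · simp [h, Ne.symm h]
  rw [Finset.sum_congr rfl fun j _ => key j, Finset.sum_sub_distrib,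
    Finset.sum_ite_eq' Finset.univ i]
  simp [mul_sub, Finset.sum_sub_distrib, ← Finset.sum_mul]

lemma lap_symm {N : ℕ} {w : Fin N → Fin N → ℝ} (hsym : ∀ i j, w i j = w j i) :
    (lapMat w)ᵀ = lapMat w := by
  ext i j
  by_cases h : i = j
  · subst h; simp [lapMat, Matrix.transpose_apply]
  · simp [lapMat, Matrix.transpose_apply, h, Ne.symm h, hsym i j]

lemma quad_form {N : ℕ} {w : Fin N → Fin N → ℝ} (hsym : ∀ i j, w i j = w j i)
    (hd : ∀ i, w i i = 0) (x : Fin N → ℝ) :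
    2 * (x ⬝ᵥ (lapMat w).mulVec x) = ∑ i, ∑ j, w i j * (x i - x j)^2 := by
  have hx : x ⬝ᵥ (lapMat w).mulVec x = ∑ i, ∑ j, w i j * (x i * (x i - x j)) := by
    simp only [dotProduct, lap_mulVec hd, Finset.mul_sum]
    refine Finset.sum_congr rfl fun i _ => Finset.sum_congr rfl fun j _ => by ring
  have hswap : x ⬝ᵥ (lapMat w).mulVec x = ∑ i, ∑ j, w i j * (x j * (x j - x i)) := by
    rw [hx, Finset.sum_comm]
    exact Finset.sum_congr rfl fun i _ => Finset.sum_congr rfl fun j _ => by rw [hsym j i]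
  rw [two_mul]
  nth_rewrite 1 [hx]
  rw [hswap, ← Finset.sum_add_distrib]
  refine Finset.sum_congr rfl fun i _ => ?_
  rw [← Finset.sum_add_distrib]
  exact Finset.sum_congr rfl fun j _ => by ring

lemma energy {N : ℕ} {L Bd : Matrix (Fin N) (Fin N) ℝ} (hLs : Lᵀ = L)
    (h1 : L * Bd * L = L) (y v : Fin N → ℝ) (hy : L.mulVec y = v) :
    v ⬝ᵥ Bd.mulVec v = v ⬝ᵥ y := by
  conv_lhs => rw [← hy, Matrix.mulVec_mulVec, Matrix.dotProduct_mulVec,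
    Matrix.vecMul_mulVec, hLs, ← Matrix.mul_assoc, h1, ← Matrix.dotProduct_mulVec, hy]
  rw [dotProduct_comm]

lemma reach_eq {V : Type*} {H : SimpleGraph V} {x : V → ℝ}
    (h : ∀ i j, H.Adj i j → x i = x j) {i j : V} (hr : H.Reachable i j) :
    x i = x j := by
  obtain ⟨p⟩ := hr
  induction p with
  | nil => rfl
  | cons ha _ ih => exact (h _ _ ha).trans ih

lemma dipole_dot {N : ℕ} (r s : Fin N) (y : Fin N → ℝ) :
    dipole r s ⬝ᵥ y = y r - y s := by
  simp [dipole, dotProduct, sub_mul, Finset.sum_sub_distrib, ite_mul]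

lemma sum_sq_zero {N : ℕ} {f : Fin N → Fin N → ℝ} (hnn : ∀ i j, 0 ≤ f i j)
    (hz : ∑ i, ∑ j, f i j = 0) : ∀ i j, f i j = 0 := by
  intro i j
  have h1 : ∀ i : Fin N, (0:ℝ) ≤ ∑ j, f i j := fun i => Finset.sum_nonneg fun j _ => hnn i j
  have h2 := (Finset.sum_eq_zero_iff_of_nonneg (fun i _ => h1 i)).mp hz i (Finset.mem_univ i)
  exact (Finset.sum_eq_zero_iff_of_nonneg (fun j _ => hnn i j)).mp h2 j (Finset.mem_univ j)

lemma sum_pair {N : ℕ} (r s : Fin N) (c : ℝ) :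
    ∑ i, ∑ j, (if i = r ∧ j = s then c else 0) = c := by
  have hin : ∀ i : Fin N, ∑ j, (if i = r ∧ j = s then c else 0)
      = if i = r then c else 0 := by
    intro i
    by_cases h : i = r
    · subst h; simp
    · simp [h]
  rw [Finset.sum_congr rfl fun i _ => hin i]
  simp

lemma lap_ker_const {N : ℕ} {w : Fin N → Fin N → ℝ} (hw : IsWeight w)
    (hconn : (wGraph w).Connected) {u : Fin N → ℝ}
    (hu : (lapMat w).mulVec u = 0) : ∀ i j, u i = u j := by
  obtain ⟨hsym, hnn, hd⟩ := hw
  have hq : ∑ i, ∑ j, w i j * (u i - u j)^2 = 0 := by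
    rw [← quad_form hsym hd u, hu]; simp
  have hterm := sum_sq_zero (f := fun i j => w i j * (u i - u j)^2)
    (fun i j => mul_nonneg (hnn i j) (sq_nonneg _)) hq
  intro i j
  refine reach_eq (fun a b hab => ?_) (hconn.preconnected i j)
  have hwab : w a b ≠ 0 := by
    rcases (show a ≠ b ∧ (w a b ≠ 0 ∨ w b a ≠ 0) from hab).2 with h | h
    · exact h
    · rw [hsym a b]; exact h
  have := hterm a b
  have h2 : (u a - u b)^2 = 0 := by
    rcases mul_eq_zero.mp this with h | h
    · exact absurd h hwab
    · exact h
  have := pow_eq_zero_iff (n := 2) (by norm_num) |>.mp h2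
  linarith

lemma lap_proj {N : ℕ} {w : Fin N → Fin N → ℝ} (hw : IsWeight w)
    (hconn : (wGraph w).Connected) (Bd : Matrix (Fin N) (Fin N) ℝ)
    (h1 : lapMat w * Bd * lapMat w = lapMat w)
    (h3 : (lapMat w * Bd)ᵀ = lapMat w * Bd) (r s : Fin N) :
    (lapMat w).mulVec (Bd.mulVec (dipole r s)) = dipole r s := by
  obtain ⟨hsym, hnn, hd⟩ := hw
  set L := lapMat w with hL
  set ν := dipole r s with hν
  have hLs : Lᵀ = L := lap_symm hsym
  have hLL : L * (L * Bd) = L := by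
    have h := congrArg Matrix.transpose h1
    rwa [Matrix.transpose_mul, h3, hLs] at h
  set u := ν - (L * Bd).mulVec ν with hu
  have hku : L.mulVec u = 0 := by
    rw [hu, Matrix.mulVec_sub, Matrix.mulVec_mulVec, hLL, sub_self]
  have hconst : ∀ i j, u i = u j := lap_ker_const ⟨hsym, hnn, hd⟩ hconn hku
  have hsumν : ∑ i, ν i = 0 := by simp [hν, dipole, Finset.sum_sub_distrib]
  have hones : L.mulVec (fun _ => (1:ℝ)) = 0 := by
    ext i; rw [lap_mulVec hd]; simp
  have hsumM : ∑ i, (L * Bd).mulVec ν i = 0 := by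
    have h0 : (fun _ => (1:ℝ)) ᵥ* (L * Bd) = 0 := by
      rw [← Matrix.vecMul_vecMul]
      have : (fun _ => (1:ℝ)) ᵥ* L = 0 := by
        rw [← hLs, Matrix.vecMul_transpose, hones]
      rw [this, Matrix.zero_vecMul]
    calc ∑ i, (L * Bd).mulVec ν i
        = (fun _ => (1:ℝ)) ⬝ᵥ (L * Bd).mulVec ν := by
          simp [dotProduct]
      _ = ((fun _ => (1:ℝ)) ᵥ* (L * Bd)) ⬝ᵥ ν := Matrix.dotProduct_mulVec _ _ _
      _ = 0 := by rw [h0]; simp [dotProduct]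
  have hsumu : ∑ i, u i = 0 := by
    rw [hu]
    simp only [Pi.sub_apply]
    rw [Finset.sum_sub_distrib, hsumν, hsumM, sub_zero]
  have hNpos : 0 < N := Fin.pos r
  have hN : (N:ℝ) ≠ 0 := Nat.cast_ne_zero.mpr hNpos.ne'
  have huz : ∀ i, u i = 0 := by
    intro i
    have hsum2 : ∑ _j : Fin N, u i = 0 := by
      rw [← hsumu]
      exact Finset.sum_congr rfl fun j _ => (hconst j i).symm
    have hmul : (N:ℝ) * u i = 0 := by
      simpa [Finset.sum_const, Finset.card_univ, nsmul_eq_mul] using hsum2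
    exact (mul_eq_zero.mp hmul).resolve_left hN
  have : (L * Bd).mulVec ν = ν := by
    ext i
    have := huz i
    rw [hu] at this
    simp only [Pi.sub_apply] at this
    linarith
  rwa [← Matrix.mulVec_mulVec] at this

theorem locality_factor_eq_one_iff_bridge {N : ℕ} (w : Fin N → Fin N → ℝ)
    (hw : IsWeight w) (hconn : (wGraph w).Connected)
    (r s : Fin N) (hedge : 0 < w r s)
    (Bdag : Matrix (Fin N) (Fin N) ℝ)
    (hB : IsMoorePenrose (lapMat w) Bdag) :
    eta w Bdag r s = 1 ↔ (wGraph w).IsBridge s(r, s) := by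
  classical
  obtain ⟨hsym, hnn, hd⟩ := hw
  have hb : w r s ≠ 0 := hedge.ne'
  have hrs : r ≠ s := by
    intro h; rw [h, hd s] at hedge; exact lt_irrefl 0 hedge
  have hLs : (lapMat w)ᵀ = lapMat w := lap_symm hsym
  set G' := wGraph w \ SimpleGraph.fromEdgeSet {s(r, s)} with hG'
  have hadjG' : ∀ i j : Fin N, w i j ≠ 0 → ¬(i = r ∧ j = s) → ¬(i = s ∧ j = r) →
      G'.Adj i j := by
    intro i j hwij h1 h2
    have hij : i ≠ j := fun h => hwij (h ▸ hd i)
    rw [hG', SimpleGraph.sdiff_adj]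
    refine ⟨(show i ≠ j ∧ (w i j ≠ 0 ∨ w j i ≠ 0) from ⟨hij, Or.inl hwij⟩), ?_⟩
    rw [SimpleGraph.fromEdgeSet_adj]
    rintro ⟨hmem, -⟩
    rw [Set.mem_singleton_iff, Sym2.eq_iff] at hmem
    tauto
  constructor
  · -- η = 1 → bridge
    intro heta
    by_contra hnb
    rw [SimpleGraph.isBridge_iff] at hnb
    push_neg at hnb
    have hreach : G'.Reachable r s := hnb
    set x := Bdag.mulVec (dipole r s) with hx
    have hproj : (lapMat w).mulVec x = dipole r s :=
      lap_proj ⟨hsym, hnn, hd⟩ hconn Bdag hB.1 hB.2.2.1 r s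
    set R := dipole r s ⬝ᵥ x with hR
    have hbR : w r s * R = 1 := heta
    have hRval : R = x r - x s := dipole_dot r s x
    have hE : x ⬝ᵥ (lapMat w).mulVec x = R := by
      rw [hproj, dotProduct_comm, hR]
    -- modified weights with the (r,s) edge removed
    set w' : Fin N → Fin N → ℝ :=
      fun i j => if (i = r ∧ j = s) ∨ (i = s ∧ j = r) then 0 else w i j with hw'
    have hterm : ∀ i j, w i j * (x i - x j)^2
        = w' i j * (x i - x j)^2
          + (if i = r ∧ j = s then w r s * (x r - x s)^2 else 0)
          + (if i = s ∧ j = r then w s r * (x s - x r)^2 else 0) := by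
      intro i j
      by_cases h1 : i = r ∧ j = s
      · obtain ⟨hi, hj⟩ := h1
        rw [hi, hj]
        simp [hw', hrs]
      · by_cases h2 : i = s ∧ j = r
        · obtain ⟨hi, hj⟩ := h2
          rw [hi, hj]
          simp [hw', Ne.symm hrs]
        · simp [hw', h1, h2]
    have hsplit : ∑ i, ∑ j, w i j * (x i - x j)^2
        = (∑ i, ∑ j, w' i j * (x i - x j)^2) + w r s * (x r - x s)^2
          + w s r * (x s - x r)^2 := by
      rw [Finset.sum_congr rfl fun i _ => Finset.sum_congr rfl fun j _ => hterm i j]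
      simp only [Finset.sum_add_distrib]
      rw [sum_pair r s (w r s * (x r - x s)^2), sum_pair s r (w s r * (x s - x r)^2)]
    have hquad := quad_form hsym hd x
    have hQ' : ∑ i, ∑ j, w' i j * (x i - x j)^2 = 0 := by
      have hsr : w s r = w r s := hsym s r
      have hsq : (x s - x r)^2 = (x r - x s)^2 := by ring
      rw [hE] at hquad
      rw [hsr, hsq] at hsplit
      have hx2 : (x r - x s) = R := hRval.symm
      rw [hx2] at hsplit
      nlinarith [hsplit, hquad, hbR]
    have hw'nn : ∀ i j, 0 ≤ w' i j := by
      intro i j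
      simp only [hw']
      split
      · exact le_rfl
      · exact hnn i j
    have hzero := sum_sq_zero (f := fun i j => w' i j * (x i - x j)^2)
      (fun i j => mul_nonneg (hw'nn i j) (sq_nonneg _)) hQ'
    have hadjeq : ∀ i j, G'.Adj i j → x i = x j := by
      intro i j hadj
      rw [hG', SimpleGraph.sdiff_adj] at hadj
      obtain ⟨⟨hij, hor⟩, hne⟩ := (show (i ≠ j ∧ (w i j ≠ 0 ∨ w j i ≠ 0)) ∧ _ from hadj)
      rw [SimpleGraph.fromEdgeSet_adj] at hne
      have hwij : w i j ≠ 0 := by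
        rcases hor with h | h
        · exact h
        · rw [hsym i j]; exact h
      have hcond : ¬((i = r ∧ j = s) ∨ (i = s ∧ j = r)) := by
        intro h
        exact hne ⟨Set.mem_singleton_iff.mpr (Sym2.eq_iff.mpr h), hij⟩
      have hz := hzero i j
      have hw'ij : w' i j = w i j := by
        simp only [hw']
        rw [if_neg hcond]
      simp only [hw'ij] at hz
      have h2 : (x i - x j)^2 = 0 := (mul_eq_zero.mp hz).resolve_left hwij
      have := pow_eq_zero_iff (n := 2) (by norm_num) |>.mp h2
      linarith
    have hxeq : x r = x s := reach_eq hadjeq hreach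
    have : (1:ℝ) = 0 := by
      rw [← hbR, hRval, hxeq]; ring
    norm_num at this
  · -- bridge → η = 1
    intro hbr
    rw [SimpleGraph.isBridge_iff] at hbr
    have hnr : ¬G'.Reachable r s := hbr
    set χ : Fin N → ℝ := fun i => if G'.Reachable r i then 1 else 0 with hχ
    have hχr : χ r = 1 := by simp [hχ]
    have hχs : χ s = 0 := by simp [hχ, hnr]
    have hterm : ∀ i j, w i j * (χ i - χ j)
        = (if i = r ∧ j = s then w r s else 0)
          + (if i = s ∧ j = r then -(w r s) else 0) := by
      intro i j
      by_cases h1 : i = r ∧ j = s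
      · obtain ⟨hi, hj⟩ := h1
        rw [hi, hj, hχr, hχs]
        simp [hrs]
      · by_cases h2 : i = s ∧ j = r
        · obtain ⟨hi, hj⟩ := h2
          rw [hi, hj, hχr, hχs]
          rw [hsym s r]
          simp [Ne.symm hrs]
        · -- neither special pair
          by_cases hwij : w i j = 0
          · simp [hwij, h1, h2]
          · have hadj := hadjG' i j hwij (fun h => h1 h) (fun h => h2 h)
            have : χ i = χ j := by
              by_cases hri : G'.Reachable r i
              · have : G'.Reachable r j := hri.trans hadj.reachable
                simp [hχ, hri, this]
              · have : ¬G'.Reachable r j := fun h => hri (h.trans hadj.symm.reachable)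
                simp [hχ, hri, this]
            simp [this, h1, h2]
    have hLχ : (lapMat w).mulVec χ = fun i => w r s * dipole r s i := by
      ext i
      rw [lap_mulVec hd]
      rw [Finset.sum_congr rfl fun j _ => hterm i j, Finset.sum_add_distrib]
      have e1 : ∑ j, (if i = r ∧ j = s then w r s else 0)
          = if i = r then w r s else 0 := by
        by_cases h : i = r
        · subst h; simp
        · simp [h]
      have e2 : ∑ j, (if i = s ∧ j = r then -(w r s) else 0)
          = if i = s then -(w r s) else 0 := by
        by_cases h : i = s
        · subst h; simp
        · simp [h]
      rw [e1, e2, dipole]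
      by_cases h1 : i = r
      · subst h1; simp [hrs, Ne.symm hrs]
      · by_cases h2 : i = s
        · subst h2; simp [h1]
        · simp [h1, h2]
    set y := (w r s)⁻¹ • χ with hy
    have hLy : (lapMat w).mulVec y = dipole r s := by
      rw [hy, Matrix.mulVec_smul, hLχ]
      ext i
      simp [smul_eq_mul, ← mul_assoc, inv_mul_cancel₀ hb]
    have hen := energy hLs hB.1 y (dipole r s) hLy
    rw [eta, hen, dipole_dot]
    rw [hy]
    simp [hχr, hχs, smul_eq_mul, mul_inv_cancel₀ hb]
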